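/- Let x̂ₙ minimize the regularized SAA objective x ↦ (1/n)∑ᵢ F(x,ξ̂ᵢ) + ε·R(x) with value Ĵ = (1/n)∑ᵢ F(x̂ₙ,ξ̂ᵢ) + ε·R(x̂ₙ). On the event that F(x̂ₙ,·)_#𝔓 lies in the W₁-ball of radius ε(R(x̂ₙ)+α₀) around F(x̂ₙ,·)_#𝔓̂ₙ, it holds that 𝔼_{ξ∼𝔓}[F(x̂ₙ,ξ)] ≤ Ĵ + εα₀. In particular, if that event has probability greater than 1−β, then ℙⁿ(𝔼_{ξ∼𝔓}[F(x̂ₙ,ξ)] ≤ Ĵ + εα₀) > 1−β. -/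

import Mathlib

open MeasureTheory ENNReal Finset

/-- Optimal transport cost between two measures (1-Wasserstein when the cost is a metric). -/
noncomputable def Wcost {E : Type*} [MeasurableSpace E] (c : E → E → ℝ)
    (μ ν : Measure E) : ℝ≥0∞ :=
  ⨅ (π : Measure (E × E)) (_ : π.map Prod.fst = μ) (_ : π.map Prod.snd = ν),
    ∫⁻ z, ENNReal.ofReal (c z.1 z.2) ∂π

/-- The empirical measure of a finite sample. -/
noncomputable def empMeasure {E : Type*} [MeasurableSpace E] {n : ℕ}
    (ξ : Fin n → E) : Measure E :=
  ((n : ℝ≥0∞))⁻¹ • ∑ i, Measure.dirac (ξ i)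

lemma kr_lemma {E : Type*} [MeasurableSpace E] (P : Measure E) [IsProbabilityMeasure P]
    (f : E → ℝ) (hf : Measurable f) (hfi : Integrable f P)
    (ν : Measure ℝ) (hνi : Integrable id ν) (r : ℝ) (hr : 0 ≤ r)
    (h : Wcost (fun a b => |a - b|) (P.map f) ν ≤ ENNReal.ofReal r) :
    ∫ x, f x ∂P ≤ (∫ y, y ∂ν) + r := by
  refine le_of_forall_pos_le_add fun δ hδ => ?_
  have hlt : Wcost (fun a b => |a - b|) (P.map f) ν < ENNReal.ofReal r + ENNReal.ofReal δ :=
    h.trans_lt (ENNReal.lt_add_right ofReal_ne_top (ENNReal.ofReal_pos.2 hδ).ne')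
  rw [Wcost] at hlt
  simp only [iInf_lt_iff] at hlt
  obtain ⟨π, h1, h2, hπ⟩ := hlt
  have hi1 : Integrable (fun z : ℝ × ℝ => z.1) π := by
    have h0 : Integrable id (P.map f) :=
      (integrable_map_measure aestronglyMeasurable_id hf.aemeasurable).2 hfi
    rw [← h1] at h0
    exact (integrable_map_measure aestronglyMeasurable_id measurable_fst.aemeasurable).1 h0
  have hi2 : Integrable (fun z : ℝ × ℝ => z.2) π := by
    have h0 : Integrable id (π.map Prod.snd) := h2 ▸ hνi
    exact (integrable_map_measure aestronglyMeasurable_id measurable_snd.aemeasurable).1 h0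
  have hsub : Integrable (fun z : ℝ × ℝ => z.1 - z.2) π := hi1.sub hi2
  have habs : Integrable (fun z : ℝ × ℝ => |z.1 - z.2|) π := hsub.abs
  have key : ∫ z : ℝ × ℝ, (z.1 - z.2) ∂π ≤ r + δ := by
    calc ∫ z : ℝ × ℝ, (z.1 - z.2) ∂π ≤ ∫ z : ℝ × ℝ, |z.1 - z.2| ∂π :=
          integral_mono hsub habs fun z => le_abs_self _
      _ = (∫⁻ z : ℝ × ℝ, ENNReal.ofReal |z.1 - z.2| ∂π).toReal := by
          rw [integral_eq_lintegral_of_nonneg_ae (ae_of_all _ fun z => abs_nonneg _)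
            habs.aestronglyMeasurable]
      _ ≤ (ENNReal.ofReal r + ENNReal.ofReal δ).toReal :=
          ENNReal.toReal_mono (by simp) hπ.le
      _ = r + δ := by
          rw [ENNReal.toReal_add ofReal_ne_top ofReal_ne_top, toReal_ofReal hr,
            toReal_ofReal hδ.le]
  rw [integral_sub hi1 hi2] at key
  have e1 : ∫ z : ℝ × ℝ, z.1 ∂π = ∫ x, f x ∂P := by
    have t1 : ∫ y, y ∂(π.map Prod.fst) = ∫ z : ℝ × ℝ, z.1 ∂π :=
      integral_map measurable_fst.aemeasurable aestronglyMeasurable_id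
    have t2 : ∫ y, y ∂(P.map f) = ∫ x, f x ∂P :=
      integral_map hf.aemeasurable aestronglyMeasurable_id
    rw [h1, t2] at t1
    exact t1.symm
  have e2 : ∫ z : ℝ × ℝ, z.2 ∂π = ∫ y, y ∂ν := by
    have t1 : ∫ y, y ∂(π.map Prod.snd) = ∫ z : ℝ × ℝ, z.2 ∂π :=
      integral_map measurable_snd.aemeasurable aestronglyMeasurable_id
    rw [h2] at t1
    exact t1.symm
  rw [e1, e2] at key
  linarith

lemma emp_int {E : Type*} [MeasurableSpace E] {n : ℕ} (hn : 0 < n) (ξ : Fin n → E)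
    (f : E → ℝ) (hf : Measurable f) :
    Integrable id ((empMeasure ξ).map f) ∧
      ∫ y, y ∂((empMeasure ξ).map f) = (∑ i, f (ξ i)) / n := by
  have hdir : ∀ a : E, Integrable f (Measure.dirac a) := fun a =>
    ⟨hf.aestronglyMeasurable, by
      simp [HasFiniteIntegral, lintegral_dirac' a hf.enorm]⟩
  have hi : Integrable f (empMeasure ξ) := by
    rw [empMeasure]
    exact (integrable_finset_sum_measure.2 fun i _ => hdir (ξ i)).smul_measure
      (by simp [hn.ne'])
  constructor
  · exact (integrable_map_measure aestronglyMeasurable_id hf.aemeasurable).2 hi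
  · have t : ∫ y, y ∂((empMeasure ξ).map f) = ∫ x, f x ∂(empMeasure ξ) :=
      integral_map hf.aemeasurable aestronglyMeasurable_id
    rw [t, empMeasure, integral_smul_measure,
      integral_finset_sum_measure fun i _ => hdir (ξ i)]
    simp only [integral_dirac' f _ hf.stronglyMeasurable]
    simp [div_eq_mul_inv, mul_comm]

/-- Finite sample guarantee: if `x̂ₙ` minimizes the regularized SAA objective with value
`Ĵ`, then on the event that `F(x̂ₙ,·)_#𝔓` lies in the `W₁`-ball of radius
`ε(R(x̂ₙ)+α₀)` around `F(x̂ₙ,·)_#𝔓̂ₙ`, the out-of-sample cost satisfies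
`𝔼_𝔓[F(x̂ₙ,ξ)] ≤ Ĵ + εα₀`; hence if that event has probability greater than `1−β`, so
does the performance guarantee. -/
theorem finite_sample_guarantee
    {Ω E X : Type*} [MeasurableSpace Ω] [MeasurableSpace E] {n : ℕ} (hn : 0 < n)
    (ℙn : Measure Ω) (𝒳 : Set X) (F : X → E → ℝ) (hFmeas : ∀ x, Measurable (F x))
    (P : Measure E) [IsProbabilityMeasure P]
    (ξhat : Ω → Fin n → E) (xhat : Ω → X) (hx𝒳 : ∀ ω, xhat ω ∈ 𝒳)
    (R : X → ℝ) (hR : ∀ x, 0 ≤ R x) (ε α₀ : ℝ) (hε : 0 < ε) (hα₀ : 0 ≤ α₀)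
    (hint : ∀ ω, Integrable (F (xhat ω)) P)
    (hmin : ∀ ω, ∀ x ∈ 𝒳,
      (∑ i, F (xhat ω) (ξhat ω i)) / n + ε * R (xhat ω) ≤
        (∑ i, F x (ξhat ω i)) / n + ε * R x)
    (Jhat : Ω → ℝ)
    (hJ : ∀ ω, Jhat ω = (∑ i, F (xhat ω) (ξhat ω i)) / n + ε * R (xhat ω)) :
    (∀ ω : Ω,
      Wcost (fun a b : ℝ => |a - b|) (P.map (F (xhat ω)))
          ((empMeasure (ξhat ω)).map (F (xhat ω))) ≤
        ENNReal.ofReal (ε * (R (xhat ω) + α₀)) →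
      ∫ ξ, F (xhat ω) ξ ∂P ≤ Jhat ω + ε * α₀) ∧
    (∀ β : ℝ,
      ℙn {ω | Wcost (fun a b : ℝ => |a - b|) (P.map (F (xhat ω)))
          ((empMeasure (ξhat ω)).map (F (xhat ω))) ≤
        ENNReal.ofReal (ε * (R (xhat ω) + α₀))} > ENNReal.ofReal (1 - β) →
      ℙn {ω | ∫ ξ, F (xhat ω) ξ ∂P ≤ Jhat ω + ε * α₀} > ENNReal.ofReal (1 - β)) := by
  have part1 : ∀ ω : Ω,
      Wcost (fun a b : ℝ => |a - b|) (P.map (F (xhat ω)))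
          ((empMeasure (ξhat ω)).map (F (xhat ω))) ≤
        ENNReal.ofReal (ε * (R (xhat ω) + α₀)) →
      ∫ ξ, F (xhat ω) ξ ∂P ≤ Jhat ω + ε * α₀ := by
    intro ω h
    have hm := hFmeas (xhat ω)
    obtain ⟨hiν, heν⟩ := emp_int hn (ξhat ω) _ hm
    have hr : 0 ≤ ε * (R (xhat ω) + α₀) := mul_nonneg hε.le (by linarith [hR (xhat ω)])
    have hk := kr_lemma P _ hm (hint ω) _ hiν _ hr h
    rw [heν] at hk
    have hexp : ε * (R (xhat ω) + α₀) = ε * R (xhat ω) + ε * α₀ := by ring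
    rw [hJ ω]
    linarith
  exact ⟨part1, fun β h => lt_of_lt_of_le h (measure_mono fun ω hω => part1 ω hω)⟩
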